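/- Let X be a measurable space equipped with a sigma-finite measure lambda, V : X -> [1,infinity) measurable, q a bounded positive proposal density, and let mu, nu be probability measures with everywhere positive bounded densities with respect to lambda satisfying ∫ V dmu < infinity and ∫ V dnu < infinity. Fix x in X. Then, with P_mu, P_nu the Metropolis-Hastings kernels with invariant distributions mu, nu (the Hastings kernels with balancing function g(u) = min(1,u)): sup over measurable f with ||f||_V <= 1 of |P_mu(x,f) - P_nu(x,f)| is at most M_x * ||mu - nu||_V + Mperp_x * |mu(x) - nu(x)|, where M_x := ∫_0^1 sup_y [ (V(y)+V(x)) q(y,x) / (mu_t(x) V(y)) ] dt and Mperp_x := ∫_0^1 ∫ (V(x)+V(z)) (mu_t(z)/mu_t(x)^2) q(z,x) * 1{ mu_t(z) q(z,x) <= mu_t(x) q(x,z) } lambda(dz) dt. -/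

import Mathlib

open MeasureTheory ProbabilityTheory ENNReal

/-- The Hastings ratio `r_μ(x,y) = μ(y)q(y,x) / (μ(x)q(x,y))` for a target density `p`. -/
noncomputable def hastingsRatio {X : Type*} (q : X → X → ℝ) (p : X → ℝ) (x y : X) : ℝ :=
  p y * q y x / (p x * q x y)

/-- The Metropolis–Hastings kernel (Hastings kernel with balancing function
`g(u) = min 1 u`), with proposal density `q` and invariant density `p`. -/
noncomputable def mhKernelFun {X : Type*} [MeasurableSpace X] (lam : Measure X)
    (q : X → X → ℝ) (p : X → ℝ) (x : X) (f : X → ℝ) : ℝ :=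
  (∫ y, f y * min 1 (hastingsRatio q p x y) * q x y ∂lam)
    + f x * (1 - ∫ y, min 1 (hastingsRatio q p x y) * q x y ∂lam)

/-- The `V`-norm `‖μ - ν‖_V = sup { |∫ f dμ - ∫ f dν| : f measurable, ‖f‖_V ≤ 1 }`. -/
noncomputable def vDistE {X : Type*} [MeasurableSpace X] (V : X → ℝ) (μ ν : Measure X) :
    ℝ≥0∞ :=
  ⨆ f : {f : X → ℝ // Measurable f ∧ ∀ x, |f x| ≤ V x},
    ENNReal.ofReal |(∫ x, f.1 x ∂μ) - ∫ x, f.1 x ∂ν|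


lemma affpos {b β : ℝ} (hb : 0 < b) (hb' : 0 < b + β) {t : ℝ} (h0 : 0 ≤ t) (h1 : t ≤ 1) :
    0 < b + t * β := by
  rcases lt_or_eq_of_le h0 with h | h
  · have h2 : 0 ≤ (1 - t) * b := mul_nonneg (by linarith) hb.le
    have h3 : 0 < t * (b + β) := mul_pos h hb'
    nlinarith
  · simp [← h, hb]

lemma rdiff (a b α β : ℝ) {s t : ℝ} (hs : b + s*β ≠ 0) (ht : b + t*β ≠ 0) :
    (a + t*α)/(b + t*β) - (a + s*α)/(b + s*β)
      = (t - s) * (α*b - a*β) / ((b + s*β) * (b + t*β)) := by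
  rw [div_sub_div _ _ ht hs]
  congr 1 <;> ring

lemma key_helper (a b α β : ℝ) (ha : 0 < a) (hb : 0 < b) (ha' : 0 < a + α) (hb' : 0 < b + β)
    (u v : ℝ) (hu : 0 ≤ u) (huv : u ≤ v) (hv : v ≤ 1)
    (hcond : ∀ t ∈ Set.Icc u v, a + t*α ≤ b + t*β) :
    ENNReal.ofReal |(a + v*α)/(b + v*β) - (a + u*α)/(b + u*β)|
      ≤ ∫⁻ t in Set.Icc (0:ℝ) 1, ENNReal.ofReal (|α|/(b + t*β)
          + (a + t*α)*|β|/(b + t*β)^2 * (if a + t*α ≤ b + t*β then 1 else 0)) := by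
  set c := α*b - a*β with hc
  have hdpos : ∀ t ∈ Set.Icc (0:ℝ) 1, 0 < b + t*β := fun t ht => affpos hb hb' ht.1 ht.2
  have hnpos : ∀ t ∈ Set.Icc (0:ℝ) 1, 0 < a + t*α := fun t ht => by
    have := affpos ha ha' ht.1 ht.2; linarith
  have hsub : Set.Icc u v ⊆ Set.Icc (0:ℝ) 1 := Set.Icc_subset_Icc hu hv
  have hder : ∀ t ∈ Set.uIcc u v, HasDerivAt (fun s => (a + s*α)/(b + s*β)) (c/(b + t*β)^2) t := by
    intro t ht
    rw [Set.uIcc_of_le huv] at ht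
    have hd := hdpos t (hsub ht)
    have h1 : HasDerivAt (fun s : ℝ => a + s*α) α t := by
      simpa using ((hasDerivAt_id t).mul_const α).const_add a
    have h2 : HasDerivAt (fun s : ℝ => b + s*β) β t := by
      simpa using ((hasDerivAt_id t).mul_const β).const_add b
    have := h1.div h2 hd.ne'
    have e : c/(b + t*β)^2 = (α * (b + t * β) - (a + t * α) * β) / (b + t * β) ^ 2 := by
      rw [hc]; ring
    rw [e]; exact this
  have hcontden : ContinuousOn (fun t : ℝ => b + t*β) (Set.Icc u v) :=
    (continuous_const.add (continuous_id.mul continuous_const)).continuousOn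
  have hcontH : ContinuousOn (fun t => |α|/(b + t*β) + (a + t*α)*|β|/(b + t*β)^2)
      (Set.Icc u v) := by
    apply ContinuousOn.add
    · exact continuousOn_const.div hcontden (fun t ht => (hdpos t (hsub ht)).ne')
    · exact (((continuous_const.add (continuous_id.mul continuous_const)).continuousOn).mul
        continuousOn_const).div (hcontden.pow 2)
        (fun t ht => pow_ne_zero _ (hdpos t (hsub ht)).ne')
  have hcontc : ContinuousOn (fun t : ℝ => c/(b + t*β)^2) (Set.Icc u v) :=
    continuousOn_const.div (hcontden.pow 2) (fun t ht => pow_ne_zero _ (hdpos t (hsub ht)).ne')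
  have hftc : (a + v*α)/(b + v*β) - (a + u*α)/(b + u*β)
      = ∫ t in u..v, c/(b + t*β)^2 := by
    rw [intervalIntegral.integral_eq_sub_of_hasDerivAt hder
      ((hcontc.mono (by rw [Set.uIcc_of_le huv])).intervalIntegrable)]
  have hptw : ∀ t ∈ Set.Icc u v,
      |c/(b + t*β)^2| ≤ |α|/(b + t*β) + (a + t*α)*|β|/(b + t*β)^2 := by
    intro t ht
    have hd := hdpos t (hsub ht)
    have hn := hnpos t (hsub ht)
    have hrw : c/(b + t*β)^2 = α/(b + t*β) - (a + t*α)*β/(b + t*β)^2 := by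
      rw [hc]; field_simp; ring
    rw [hrw]
    calc |α/(b + t*β) - (a + t*α)*β/(b + t*β)^2|
        ≤ |α/(b + t*β)| + |(a + t*α)*β/(b + t*β)^2| := abs_sub _ _
      _ = |α|/(b + t*β) + (a + t*α)*|β|/(b + t*β)^2 := by
          rw [abs_div, abs_div, abs_of_pos hd, abs_of_pos (pow_pos hd 2), abs_mul,
            abs_of_pos hn]
  have hHint : IntegrableOn (fun t => |α|/(b + t*β) + (a + t*α)*|β|/(b + t*β)^2)
      (Set.Icc u v) volume := hcontH.integrableOn_Icc
  have step1 : |(a + v*α)/(b + v*β) - (a + u*α)/(b + u*β)|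
      ≤ ∫ t in Set.Icc u v, (|α|/(b + t*β) + (a + t*α)*|β|/(b + t*β)^2) := by
    rw [hftc, MeasureTheory.integral_Icc_eq_integral_Ioc, ← intervalIntegral.integral_of_le huv]
    apply intervalIntegral.abs_integral_le_integral_abs huv |>.trans
    apply intervalIntegral.integral_mono_on huv
    · exact ((hcontc.mono (by rw [Set.uIcc_of_le huv])).intervalIntegrable).abs
    · exact (show ContinuousOn _ (Set.uIcc u v) by
        rw [Set.uIcc_of_le huv]; exact hcontH).intervalIntegrable
    · exact hptw
  calc ENNReal.ofReal |(a + v*α)/(b + v*β) - (a + u*α)/(b + u*β)|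
      ≤ ENNReal.ofReal (∫ t in Set.Icc u v, (|α|/(b + t*β) + (a + t*α)*|β|/(b + t*β)^2)) :=
        ENNReal.ofReal_le_ofReal step1
    _ = ∫⁻ t in Set.Icc u v, ENNReal.ofReal (|α|/(b + t*β) + (a + t*α)*|β|/(b + t*β)^2) := by
        apply ofReal_integral_eq_lintegral_ofReal hHint
        filter_upwards [self_mem_ae_restrict measurableSet_Icc] with t ht
        have hd := hdpos t (hsub ht)
        have hn := hnpos t (hsub ht)
        positivity
    _ = ∫⁻ t in Set.Icc u v, ENNReal.ofReal (|α|/(b + t*β)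
          + (a + t*α)*|β|/(b + t*β)^2 * (if a + t*α ≤ b + t*β then 1 else 0)) := by
        apply setLIntegral_congr_fun measurableSet_Icc
        intro t ht
        beta_reduce
        rw [if_pos (hcond t ht), mul_one]
    _ ≤ _ := lintegral_mono_set hsub

lemma key_min (a b α β : ℝ) (ha : 0 < a) (hb : 0 < b) (ha' : 0 < a + α) (hb' : 0 < b + β) :
    ENNReal.ofReal |min 1 ((a + α)/(b + β)) - min 1 (a/b)|
      ≤ ∫⁻ t in Set.Icc (0:ℝ) 1, ENNReal.ofReal (|α|/(b + t*β)
          + (a + t*α)*|β|/(b + t*β)^2 * (if a + t*α ≤ b + t*β then 1 else 0)) := by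
  have hdpos : ∀ t ∈ Set.Icc (0:ℝ) 1, 0 < b + t*β := fun t ht => affpos hb hb' ht.1 ht.2
  set r : ℝ → ℝ := fun t => (a + t*α)/(b + t*β) with hrdef
  have hr0 : r 0 = a/b := by simp [hrdef]
  have hr1 : r 1 = (a + α)/(b + β) := by norm_num [hrdef]
  have hrmono : ∀ s ∈ Set.Icc (0:ℝ) 1, ∀ t ∈ Set.Icc (0:ℝ) 1,
      r t - r s = (t - s) * (α*b - a*β) / ((b + s*β) * (b + t*β)) := fun s hs t ht =>
    rdiff a b α β (hdpos s hs).ne' (hdpos t ht).ne'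
  have h01 : (0:ℝ) ∈ Set.Icc (0:ℝ) 1 := by norm_num
  have h11 : (1:ℝ) ∈ Set.Icc (0:ℝ) 1 := by norm_num
  have hrle : ∀ t ∈ Set.Icc (0:ℝ) 1, (r t ≤ 1 ↔ a + t*α ≤ b + t*β) := fun t ht =>
    div_le_one (hdpos t ht)
  have hrcont : ContinuousOn r (Set.Icc (0:ℝ) 1) :=
    ((continuous_const.add (continuous_id.mul continuous_const)).continuousOn).div
      ((continuous_const.add (continuous_id.mul continuous_const)).continuousOn)
      (fun t ht => (hdpos t ht).ne')
  rw [← hr0, ← hr1]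
  rcases le_or_gt (r 0) 1 with h0 | h0 <;> rcases le_or_gt (r 1) 1 with h1 | h1
  · -- both ≤ 1
    rw [min_eq_right h1, min_eq_right h0]
    have hcond : ∀ t ∈ Set.Icc (0:ℝ) 1, a + t*α ≤ b + t*β := by
      intro t ht
      rw [← hrle t ht]
      rcases le_or_gt 0 (α*b - a*β) with hc | hc
      · have := hrmono t ht 1 h11
        have h2 : 0 ≤ r 1 - r t := by
          rw [this]
          apply div_nonneg (mul_nonneg (by linarith [ht.2]) hc)
            (mul_nonneg (hdpos t ht).le (hdpos 1 h11).le)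
        linarith
      · have := hrmono 0 h01 t ht
        have h2 : r t - r 0 ≤ 0 := by
          rw [this]
          apply div_nonpos_of_nonpos_of_nonneg
            (mul_nonpos_of_nonneg_of_nonpos (by linarith [ht.1]) hc.le)
            (mul_nonneg (hdpos 0 h01).le (hdpos t ht).le)
        linarith
    have := key_helper a b α β ha hb ha' hb' 0 1 le_rfl zero_le_one le_rfl hcond
    simpa [hrdef] using this
  · -- r 0 ≤ 1 < r 1 : increasing through 1
    rw [min_eq_left h1.le, min_eq_right h0]
    have hmem : (1:ℝ) ∈ Set.Icc (r 0) (r 1) := ⟨h0, h1.le⟩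
    obtain ⟨w, hw, hrw⟩ := intermediate_value_Icc zero_le_one hrcont hmem
    have hcpos : 0 < α*b - a*β := by
      have := hrmono 0 h01 1 h11
      have h2 : 0 < r 1 - r 0 := by linarith
      rw [this] at h2
      have hden : 0 < (b + 0*β) * (b + 1*β) := mul_pos (hdpos 0 h01) (hdpos 1 h11)
      by_contra hc
      push_neg at hc
      have h3 : (1 - 0) * (α*b - a*β) / ((b + 0*β) * (b + 1*β)) ≤ 0 :=
        div_nonpos_of_nonpos_of_nonneg (by linarith) hden.le
      linarith
    have hcond : ∀ t ∈ Set.Icc 0 w, a + t*α ≤ b + t*β := by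
      intro t ht
      have ht' : t ∈ Set.Icc (0:ℝ) 1 := ⟨ht.1, ht.2.trans hw.2⟩
      rw [← hrle t ht']
      have := hrmono t ht' w hw
      have h2 : 0 ≤ r w - r t := by
        rw [this]
        apply div_nonneg (mul_nonneg (by linarith [ht.2]) hcpos.le)
          (mul_nonneg (hdpos t ht').le (hdpos w hw).le)
      linarith [hrw ▸ h2]
    have := key_helper a b α β ha hb ha' hb' 0 w le_rfl hw.1 hw.2 hcond
    have heq : (a + w*α)/(b + w*β) = 1 := hrw
    rw [heq] at this
    simpa [hrdef] using this
  · -- r 1 ≤ 1 < r 0 : decreasing through 1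
    rw [min_eq_right h1, min_eq_left h0.le]
    have hmem : (1:ℝ) ∈ Set.Icc (r 1) (r 0) := ⟨h1, h0.le⟩
    obtain ⟨w, hw, hrw⟩ := intermediate_value_Icc' zero_le_one hrcont hmem
    have hcneg : α*b - a*β < 0 := by
      have := hrmono 0 h01 1 h11
      have h2 : r 1 - r 0 < 0 := by linarith
      rw [this] at h2
      have hden : 0 < (b + 0*β) * (b + 1*β) := mul_pos (hdpos 0 h01) (hdpos 1 h11)
      by_contra hc
      push_neg at hc
      have h3 : 0 ≤ (1 - 0) * (α*b - a*β) / ((b + 0*β) * (b + 1*β)) :=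
        div_nonneg (by linarith) hden.le
      linarith
    have hcond : ∀ t ∈ Set.Icc w 1, a + t*α ≤ b + t*β := by
      intro t ht
      have ht' : t ∈ Set.Icc (0:ℝ) 1 := ⟨hw.1.trans ht.1, ht.2⟩
      rw [← hrle t ht']
      have := hrmono w hw t ht'
      have h2 : r t - r w ≤ 0 := by
        rw [this]
        apply div_nonpos_of_nonpos_of_nonneg
          (mul_nonpos_of_nonneg_of_nonpos (by linarith [ht.1]) hcneg.le)
          (mul_nonneg (hdpos w hw).le (hdpos t ht').le)
      linarith [hrw ▸ h2]
    have := key_helper a b α β ha hb ha' hb' w 1 hw.1 hw.2 le_rfl hcond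
    have heq : (a + w*α)/(b + w*β) = 1 := hrw
    rw [heq] at this
    rw [show (a + 1*α)/(b + 1*β) = r 1 by norm_num [hrdef]] at this
    exact this
  · -- both > 1
    rw [min_eq_left h1.le, min_eq_left h0.le]
    simp

lemma lsc_div (k : ℝ) {g : ℝ → ℝ} (hg : Continuous g) :
    LowerSemicontinuous fun t => ENNReal.ofReal (k / g t) := by
  intro t
  rcases eq_or_ne (g t) 0 with h | h
  · intro cc hcc
    simp [h] at hcc
  · exact ((ENNReal.continuous_ofReal.continuousAt).comp
      ((continuousAt_const.div hg.continuousAt h))).lowerSemicontinuousAt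

lemma diff_rep {X : Type*} [MeasurableSpace X] {lam : Measure X} (f g1 g2 w : X → ℝ) (k : ℝ)
    (h1 : Integrable (fun y => f y * g1 y * w y) lam)
    (h2 : Integrable (fun y => f y * g2 y * w y) lam)
    (h3 : Integrable (fun y => g1 y * w y) lam)
    (h4 : Integrable (fun y => g2 y * w y) lam) :
    ((∫ y, f y * g1 y * w y ∂lam) + k * (1 - ∫ y, g1 y * w y ∂lam))
      - ((∫ y, f y * g2 y * w y ∂lam) + k * (1 - ∫ y, g2 y * w y ∂lam))
      = ∫ y, (f y - k) * ((g1 y - g2 y) * w y) ∂lam := by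
  have e : (fun y => (f y - k) * ((g1 y - g2 y) * w y))
      = fun y => (f y * g1 y * w y - f y * g2 y * w y)
        - (k * (g1 y * w y) - k * (g2 y * w y)) := by funext y; ring
  have h12 : Integrable (fun y => f y * g1 y * w y - f y * g2 y * w y) lam := h1.sub h2
  have h34 : Integrable (fun y => k * (g1 y * w y) - k * (g2 y * w y)) lam :=
    (h3.const_mul k).sub (h4.const_mul k)
  rw [e]
  rw [integral_sub h12 h34,
    integral_sub h1 h2, integral_sub (h3.const_mul k) (h4.const_mul k),
    MeasureTheory.integral_const_mul, MeasureTheory.integral_const_mul]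
  ring
theorem stmt_11 {X : Type*} [MeasurableSpace X]
    (lam : Measure X) [SigmaFinite lam]
    (V : X → ℝ) (hVm : Measurable V) (hV1 : ∀ x, 1 ≤ V x)
    (q : X → X → ℝ) (hqm : Measurable (Function.uncurry q))
    (hqpos : ∀ x y, 0 < q x y) (hqb : ∃ c, ∀ x y, q x y ≤ c)
    (hqint : ∀ x, ∫ y, q x y ∂lam = 1)
    (pμ pν : X → ℝ) (hpμm : Measurable pμ) (hpνm : Measurable pν)
    (hpμpos : ∀ x, 0 < pμ x) (hpνpos : ∀ x, 0 < pν x)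
    (hpμb : ∃ c, ∀ x, pμ x ≤ c) (hpνb : ∃ c, ∀ x, pν x ≤ c)
    (hμprob : IsProbabilityMeasure (lam.withDensity fun x => ENNReal.ofReal (pμ x)))
    (hνprob : IsProbabilityMeasure (lam.withDensity fun x => ENNReal.ofReal (pν x)))
    (hVμ : Integrable (fun x => V x * pμ x) lam)
    (hVν : Integrable (fun x => V x * pν x) lam)
    (x : X) :
    ∀ f : X → ℝ, Measurable f → (∀ y, |f y| ≤ V y) →
      ENNReal.ofReal |mhKernelFun lam q pμ x f - mhKernelFun lam q pν x f|
        ≤ (∫⁻ t in Set.Icc (0 : ℝ) 1,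
              ⨆ y, ENNReal.ofReal
                ((V y + V x) * q y x / (((1 - t) * pμ x + t * pν x) * V y)))
            * vDistE V (lam.withDensity fun z => ENNReal.ofReal (pμ z))
                (lam.withDensity fun z => ENNReal.ofReal (pν z))
          + (∫⁻ t in Set.Icc (0 : ℝ) 1,
                ∫⁻ z, ENNReal.ofReal
                  ((V x + V z) *
                    (((1 - t) * pμ z + t * pν z) / ((1 - t) * pμ x + t * pν x) ^ 2) *
                      q z x *
                        (if ((1 - t) * pμ z + t * pν z) * q z x ≤
                            ((1 - t) * pμ x + t * pν x) * q x z then 1 else 0))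
                ∂lam)
              * ENNReal.ofReal |pμ x - pν x| := by
  intro f hfm hfV
  obtain ⟨c, hqc⟩ := hqb
  have hc0 : 0 < c := lt_of_lt_of_le (hqpos x x) (hqc x x)
  have hqxm : Measurable fun y => q x y := hqm.comp measurable_prodMk_left
  have hqym : Measurable fun y => q y x := hqm.comp (measurable_id.prodMk measurable_const)
  have hV0 : ∀ z, (0:ℝ) < V z := fun z => lt_of_lt_of_le one_pos (hV1 z)
  -- positivity of interpolated density
  have hlz : ∀ (z : X) (t : ℝ), t ∈ Set.Icc (0:ℝ) 1 → 0 < (1 - t) * pμ z + t * pν z := by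
    intro z t ht
    have e : (1 - t) * pμ z + t * pν z = pμ z + t * (pν z - pμ z) := by ring
    rw [e]
    exact affpos (hpμpos z) (by linarith [hpνpos z]) ht.1 ht.2
  -- measurability of min-ratio
  have hrm : ∀ (p : X → ℝ), Measurable p → Measurable fun y => min 1 (hastingsRatio q p x y) := by
    intro p hp
    exact measurable_const.min ((hp.mul hqym).div (measurable_const.mul hqxm))
  have hgnn : ∀ (p : X → ℝ), (∀ z, 0 < p z) → ∀ y, 0 ≤ min 1 (hastingsRatio q p x y) := by
    intro p hp y
    exact le_min zero_le_one
      (le_of_lt (div_pos (mul_pos (hp y) (hqpos y x)) (mul_pos (hp x) (hqpos x y))))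
  have hgb : ∀ (p : X → ℝ), (∀ z, 0 < p z) → ∀ y,
      min 1 (hastingsRatio q p x y) * q x y ≤ c / p x * p y := by
    intro p hp y
    have h1 : min 1 (hastingsRatio q p x y) * q x y ≤ hastingsRatio q p x y * q x y :=
      mul_le_mul_of_nonneg_right (min_le_right _ _) (hqpos x y).le
    have h2 : hastingsRatio q p x y * q x y = p y * q y x / p x := by
      unfold hastingsRatio
      rw [div_mul_eq_mul_div, mul_div_mul_right _ _ (hqpos x y).ne']
    have h3 : p y * q y x / p x ≤ c / p x * p y := by
      rw [show c / p x * p y = p y * c / p x by ring, div_eq_mul_inv, div_eq_mul_inv]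
      exact mul_le_mul_of_nonneg_right
        (mul_le_mul_of_nonneg_left (hqc y x) (hp y).le) (inv_nonneg.2 (hp x).le)
    linarith [h2 ▸ h1]
  -- integrability package
  have hintp : ∀ (p : X → ℝ), Measurable p → (∀ z, 0 < p z) →
      Integrable (fun y => V y * p y) lam →
      Integrable (fun y => f y * min 1 (hastingsRatio q p x y) * q x y) lam ∧
      Integrable (fun y => min 1 (hastingsRatio q p x y) * q x y) lam := by
    intro p hpm hp hVp
    have hb2 : ∀ y, min 1 (hastingsRatio q p x y) * q x y ≤ c / p x * (V y * p y) := by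
      intro y
      calc min 1 (hastingsRatio q p x y) * q x y ≤ c / p x * p y := hgb p hp y
        _ ≤ c / p x * (V y * p y) := by
            exact mul_le_mul_of_nonneg_left (le_mul_of_one_le_left (hp y).le (hV1 y))
              (div_nonneg hc0.le (hp x).le)
    have hnn : ∀ y, 0 ≤ min 1 (hastingsRatio q p x y) * q x y := fun y =>
      mul_nonneg (hgnn p hp y) (hqpos x y).le
    constructor
    · apply Integrable.mono' (hVp.const_mul (c / p x))
        ((hfm.mul (hrm p hpm)).mul hqxm).aestronglyMeasurable
      filter_upwards with y
      rw [Real.norm_eq_abs, mul_assoc]; simp only [Pi.mul_apply]; rw [abs_mul, abs_of_nonneg (hnn y)]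
      calc |f y| * (min 1 (hastingsRatio q p x y) * q x y)
          ≤ V y * (c / p x * p y) :=
            mul_le_mul (hfV y) (hgb p hp y) (hnn y) (hV0 y).le
        _ = c / p x * (V y * p y) := by ring
    · apply Integrable.mono' (hVp.const_mul (c / p x))
        ((hrm p hpm).mul hqxm).aestronglyMeasurable
      filter_upwards with y
      rw [Real.norm_eq_abs]; simp only [Pi.mul_apply]; rw [abs_of_nonneg (hnn y)]
      exact hb2 y
  obtain ⟨hI1, hI3⟩ := hintp pμ hpμm hpμpos hVμ
  obtain ⟨hI2, hI4⟩ := hintp pν hpνm hpνpos hVν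
  -- representation of the difference
  have hrep : mhKernelFun lam q pμ x f - mhKernelFun lam q pν x f
      = ∫ y, (f y - f x) *
          ((min 1 (hastingsRatio q pμ x y) - min 1 (hastingsRatio q pν x y)) * q x y) ∂lam := by
    unfold mhKernelFun
    exact diff_rep f _ _ _ (f x) hI1 hI2 hI3 hI4
  have hhint : Integrable (fun y => (f y - f x) *
      ((min 1 (hastingsRatio q pμ x y) - min 1 (hastingsRatio q pν x y)) * q x y)) lam := by
    have hA : Integrable (fun y =>
        (f y * min 1 (hastingsRatio q pμ x y) * q x y
          - f y * min 1 (hastingsRatio q pν x y) * q x y)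
        - (f x * (min 1 (hastingsRatio q pμ x y) * q x y)
          - f x * (min 1 (hastingsRatio q pν x y) * q x y))) lam :=
      (hI1.sub hI2).sub ((hI3.const_mul (f x)).sub (hI4.const_mul (f x)))
    exact hA.congr (ae_of_all _ fun y => by ring)
  -- integrability of V * |Δ|
  have hVΔint : Integrable (fun y => V y * |pν y - pμ y|) lam := by
    apply Integrable.mono' (hVν.add hVμ) (hVm.mul ((hpνm.sub hpμm).abs)).aestronglyMeasurable
    filter_upwards with y
    rw [Real.norm_eq_abs]; simp only [Pi.mul_apply, Pi.add_apply, Pi.sub_apply]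
    rw [abs_of_nonneg (mul_nonneg (hV0 y).le (abs_nonneg _))]
    have habs : |pν y - pμ y| ≤ pν y + pμ y := by
      rw [abs_le]
      constructor <;> nlinarith [hpνpos y, hpμpos y]
    calc V y * |pν y - pμ y| ≤ V y * (pν y + pμ y) :=
        mul_le_mul_of_nonneg_left habs (hV0 y).le
      _ = V y * pν y + V y * pμ y := by ring
  -- the V-distance dominates ∫ V |Δ|
  have hCle : ENNReal.ofReal (∫ y, V y * |pν y - pμ y| ∂lam)
      ≤ vDistE V (lam.withDensity fun z => ENNReal.ofReal (pμ z))
          (lam.withDensity fun z => ENNReal.ofReal (pν z)) := by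
    set f₀ : X → ℝ := fun z => if pν z ≤ pμ z then V z else -V z with hf₀
    have hf₀m : Measurable f₀ := Measurable.ite (measurableSet_le hpνm hpμm) hVm hVm.neg
    have hf₀V : ∀ z, |f₀ z| ≤ V z := by
      intro z
      rw [hf₀]
      by_cases h : pν z ≤ pμ z
      · simp only [if_pos h]
        rw [abs_of_nonneg (hV0 z).le]
      · simp only [if_neg h]
        rw [abs_neg, abs_of_nonneg (hV0 z).le]
    have hpf : ∀ (p : X → ℝ), Measurable p → (∀ z, 0 < p z) →
        Integrable (fun z => V z * p z) lam →
        (∫ z, f₀ z ∂(lam.withDensity fun z => ENNReal.ofReal (p z))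
            = ∫ z, p z * f₀ z ∂lam)
          ∧ Integrable (fun z => p z * f₀ z) lam := by
      intro p hpm hp hVp
      constructor
      · rw [show (fun z => ENNReal.ofReal (p z))
            = (fun z => ((fun z => (p z).toNNReal) z : ℝ≥0∞)) from rfl]
        rw [integral_withDensity_eq_integral_smul hpm.real_toNNReal f₀]
        congr 1
        funext z
        rw [NNReal.smul_def, Real.coe_toNNReal _ (hp z).le, smul_eq_mul]
      · apply Integrable.mono' hVp (hpm.mul hf₀m).aestronglyMeasurable
        filter_upwards with z
        rw [Real.norm_eq_abs]; simp only [Pi.mul_apply]; rw [abs_mul, abs_of_nonneg (hp z).le]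
        calc p z * |f₀ z| ≤ p z * V z := mul_le_mul_of_nonneg_left (hf₀V z) (hp z).le
          _ = V z * p z := mul_comm _ _
    obtain ⟨hμeq, hμint⟩ := hpf pμ hpμm hpμpos hVμ
    obtain ⟨hνeq, hνint⟩ := hpf pν hpνm hpνpos hVν
    have hdiff : (∫ z, f₀ z ∂(lam.withDensity fun z => ENNReal.ofReal (pμ z)))
        - ∫ z, f₀ z ∂(lam.withDensity fun z => ENNReal.ofReal (pν z))
        = ∫ y, V y * |pν y - pμ y| ∂lam := by
      rw [hμeq, hνeq, ← integral_sub hμint hνint]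
      apply integral_congr_ae (ae_of_all _ ?_)
      intro z
      rw [hf₀]
      by_cases h : pν z ≤ pμ z
      · simp only [if_pos h]
        rw [abs_of_nonpos (by linarith : pν z - pμ z ≤ 0)]
        ring
      · simp only [if_neg h]
        rw [abs_of_pos (by linarith [lt_of_not_ge h] : (0:ℝ) < pν z - pμ z)]
        ring
    unfold vDistE
    refine le_trans (le_of_eq ?_)
      (le_iSup (fun g : {g : X → ℝ // Measurable g ∧ ∀ z, |g z| ≤ V z} =>
        ENNReal.ofReal |(∫ z, g.1 z ∂(lam.withDensity fun z => ENNReal.ofReal (pμ z)))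
          - ∫ z, g.1 z ∂(lam.withDensity fun z => ENNReal.ofReal (pν z))|)
        ⟨f₀, hf₀m, hf₀V⟩)
    congr 1
    rw [hdiff]
    exact (abs_of_nonneg (integral_nonneg fun y =>
      mul_nonneg (hV0 y).le (abs_nonneg _))).symm
  -- measurability of the sup function
  have hSm : Measurable fun t : ℝ => ⨆ y, ENNReal.ofReal
      ((V y + V x) * q y x / (((1 - t) * pμ x + t * pν x) * V y)) := by
    apply LowerSemicontinuous.measurable
    apply lowerSemicontinuous_iSup
    intro y
    exact lsc_div _ (by fun_prop)
  -- pointwise-in-y mean value bound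
  set Phi : X → ℝ → ℝ := fun y t =>
    (V y + V x) * q y x * |pν y - pμ y| / ((1 - t) * pμ x + t * pν x)
    + (V x + V y) * (((1 - t) * pμ y + t * pν y) / ((1 - t) * pμ x + t * pν x) ^ 2) * q y x *
        (if ((1 - t) * pμ y + t * pν y) * q y x ≤ ((1 - t) * pμ x + t * pν x) * q x y
          then (1:ℝ) else 0) * |pμ x - pν x| with hPhi
  have perY : ∀ y, ENNReal.ofReal |(f y - f x) *
      ((min 1 (hastingsRatio q pμ x y) - min 1 (hastingsRatio q pν x y)) * q x y)|
      ≤ ∫⁻ t in Set.Icc (0:ℝ) 1, ENNReal.ofReal (Phi y t) := by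
    intro y
    have hk : (0:ℝ) ≤ (V y + V x) * q x y :=
      mul_nonneg (by linarith [hV0 y, hV0 x]) (hqpos x y).le
    have hKM := key_min (pμ y * q y x) (pμ x * q x y) ((pν y - pμ y) * q y x)
      ((pν x - pμ x) * q x y)
      (mul_pos (hpμpos y) (hqpos y x)) (mul_pos (hpμpos x) (hqpos x y))
      (by rw [show pμ y * q y x + (pν y - pμ y) * q y x = pν y * q y x from by ring]
          exact mul_pos (hpνpos y) (hqpos y x))
      (by rw [show pμ x * q x y + (pν x - pμ x) * q x y = pν x * q x y from by ring]
          exact mul_pos (hpνpos x) (hqpos x y))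
    rw [show pμ y * q y x + (pν y - pμ y) * q y x = pν y * q y x from by ring,
        show pμ x * q x y + (pν x - pμ x) * q x y = pν x * q x y from by ring,
        abs_sub_comm] at hKM
    have hKM' : ENNReal.ofReal
        |min 1 (hastingsRatio q pμ x y) - min 1 (hastingsRatio q pν x y)|
        ≤ ∫⁻ t in Set.Icc (0:ℝ) 1, ENNReal.ofReal
            (|(pν y - pμ y) * q y x| / (pμ x * q x y + t * ((pν x - pμ x) * q x y))
              + (pμ y * q y x + t * ((pν y - pμ y) * q y x)) * |(pν x - pμ x) * q x y|
                  / (pμ x * q x y + t * ((pν x - pμ x) * q x y)) ^ 2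
                * (if pμ y * q y x + t * ((pν y - pμ y) * q y x)
                    ≤ pμ x * q x y + t * ((pν x - pμ x) * q x y) then 1 else 0)) := hKM
    have h1 : |f y - f x| ≤ V y + V x := by
      calc |f y - f x| = |f y + -f x| := by rw [sub_eq_add_neg]
        _ ≤ |f y| + |-f x| := abs_add_le _ _
        _ = |f y| + |f x| := by rw [abs_neg]
        _ ≤ V y + V x := add_le_add (hfV y) (hfV x)
    have habs : |(f y - f x) *
        ((min 1 (hastingsRatio q pμ x y) - min 1 (hastingsRatio q pν x y)) * q x y)|
        ≤ ((V y + V x) * q x y) *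
          |min 1 (hastingsRatio q pμ x y) - min 1 (hastingsRatio q pν x y)| := by
      rw [abs_mul, abs_mul, abs_of_pos (hqpos x y)]
      calc |f y - f x| *
          (|min 1 (hastingsRatio q pμ x y) - min 1 (hastingsRatio q pν x y)| * q x y)
          ≤ (V y + V x) *
            (|min 1 (hastingsRatio q pμ x y) - min 1 (hastingsRatio q pν x y)| * q x y) :=
            mul_le_mul_of_nonneg_right h1 (mul_nonneg (abs_nonneg _) (hqpos x y).le)
        _ = _ := by ring
    refine le_trans (ENNReal.ofReal_le_ofReal habs) ?_
    rw [ENNReal.ofReal_mul hk]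
    refine le_trans (mul_le_mul_right hKM' _) ?_
    rw [← lintegral_const_mul' _ _ ENNReal.ofReal_ne_top]
    apply lintegral_mono_ae
    filter_upwards [self_mem_ae_restrict measurableSet_Icc] with t ht
    rw [← ENNReal.ofReal_mul hk]
    apply ENNReal.ofReal_le_ofReal
    apply le_of_eq
    have hd := hlz x t ht
    have hn := hlz y t ht
    rw [hPhi]
    simp only [show pμ y * q y x + t * ((pν y - pμ y) * q y x)
          = ((1 - t) * pμ y + t * pν y) * q y x from by ring,
        show pμ x * q x y + t * ((pν x - pμ x) * q x y)
          = ((1 - t) * pμ x + t * pν x) * q x y from by ring,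
        show |(pν y - pμ y) * q y x| = |pν y - pμ y| * q y x from by
          rw [abs_mul, abs_of_pos (hqpos y x)],
        show |(pν x - pμ x) * q x y| = |pμ x - pν x| * q x y from by
          rw [abs_mul, abs_of_pos (hqpos x y), abs_sub_comm]]
    by_cases hif : ((1 - t) * pμ y + t * pν y) * q y x ≤ ((1 - t) * pμ x + t * pν x) * q x y
    · rw [if_pos hif]
      simp only [mul_one]
      field_simp [hd.ne', (hqpos x y).ne']
      ring
    · rw [if_neg hif]
      simp only [mul_zero, zero_mul, add_zero]
      field_simp [hd.ne', (hqpos x y).ne']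
  -- joint measurability of Phi
  have hPhim : AEMeasurable (Function.uncurry fun y t => ENNReal.ofReal (Phi y t))
      (lam.prod (volume.restrict (Set.Icc (0:ℝ) 1))) := by
    apply Measurable.aemeasurable
    have heq : (Function.uncurry fun y t => ENNReal.ofReal (Phi y t))
        = fun p : X × ℝ => ENNReal.ofReal (Phi p.1 p.2) := rfl
    rw [heq]
    apply Measurable.ennreal_ofReal
    have m1 : Measurable fun p : X × ℝ => V p.1 := hVm.comp measurable_fst
    have m2 : Measurable fun p : X × ℝ => q p.1 x := hqym.comp measurable_fst
    have m3 : Measurable fun p : X × ℝ => q x p.1 := hqxm.comp measurable_fst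
    have m4 : Measurable fun p : X × ℝ => |pν p.1 - pμ p.1| :=
      ((hpνm.comp measurable_fst).sub (hpμm.comp measurable_fst)).abs
    have m5 : Measurable fun p : X × ℝ => (1 - p.2) * pμ p.1 + p.2 * pν p.1 :=
      ((measurable_const.sub measurable_snd).mul (hpμm.comp measurable_fst)).add
        (measurable_snd.mul (hpνm.comp measurable_fst))
    have m6 : Measurable fun p : X × ℝ => (1 - p.2) * pμ x + p.2 * pν x :=
      ((measurable_const.sub measurable_snd).mul measurable_const).add
        (measurable_snd.mul measurable_const)
    have mite : Measurable fun p : X × ℝ =>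
        (if ((1 - p.2) * pμ p.1 + p.2 * pν p.1) * q p.1 x
            ≤ ((1 - p.2) * pμ x + p.2 * pν x) * q x p.1 then (1:ℝ) else 0) :=
      Measurable.ite (measurableSet_le (m5.mul m2) (m6.mul m3)) measurable_const
        measurable_const
    rw [hPhi]
    exact ((((m1.add measurable_const).mul m2).mul m4).div m6).add
      (((((measurable_const.add m1).mul (m5.div (m6.pow_const 2))).mul m2).mul mite).mul
        measurable_const)
  -- per-t bound
  have perT : ∀ t ∈ Set.Icc (0:ℝ) 1,
      (∫⁻ y, ENNReal.ofReal (Phi y t) ∂lam)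
        ≤ (⨆ y, ENNReal.ofReal
              ((V y + V x) * q y x / (((1 - t) * pμ x + t * pν x) * V y)))
            * vDistE V (lam.withDensity fun z => ENNReal.ofReal (pμ z))
                (lam.withDensity fun z => ENNReal.ofReal (pν z))
          + (∫⁻ z, ENNReal.ofReal
                ((V x + V z) *
                  (((1 - t) * pμ z + t * pν z) / ((1 - t) * pμ x + t * pν x) ^ 2) *
                    q z x *
                      (if ((1 - t) * pμ z + t * pν z) * q z x ≤
                          ((1 - t) * pμ x + t * pν x) * q x z then 1 else 0)) ∂lam)
              * ENNReal.ofReal |pμ x - pν x| := by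
    intro t ht
    have hd := hlz x t ht
    have hnn2 : ∀ y, 0 ≤ (V x + V y) *
        (((1 - t) * pμ y + t * pν y) / ((1 - t) * pμ x + t * pν x) ^ 2) * q y x *
          (if ((1 - t) * pμ y + t * pν y) * q y x ≤ ((1 - t) * pμ x + t * pν x) * q x y
            then (1:ℝ) else 0) := by
      intro y
      apply mul_nonneg (mul_nonneg (mul_nonneg (by linarith [hV0 y, hV0 x])
        (div_nonneg (hlz y t ht).le (by positivity))) (hqpos y x).le)
      split <;> norm_num
    have hsplit : ∀ y, ENNReal.ofReal (Phi y t)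
        = ENNReal.ofReal
            ((V y + V x) * q y x * |pν y - pμ y| / ((1 - t) * pμ x + t * pν x))
          + ENNReal.ofReal ((V x + V y) *
              (((1 - t) * pμ y + t * pν y) / ((1 - t) * pμ x + t * pν x) ^ 2) * q y x *
                (if ((1 - t) * pμ y + t * pν y) * q y x ≤
                    ((1 - t) * pμ x + t * pν x) * q x y then (1:ℝ) else 0)
              * |pμ x - pν x|) := by
      intro y
      rw [hPhi]
      apply ENNReal.ofReal_add
      · apply div_nonneg _ hd.le
        exact mul_nonneg (mul_nonneg (by linarith [hV0 y, hV0 x]) (hqpos y x).le)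
          (abs_nonneg _)
      · exact mul_nonneg (hnn2 y) (abs_nonneg _)
    have hm1 : Measurable fun y => ENNReal.ofReal
        ((V y + V x) * q y x * |pν y - pμ y| / ((1 - t) * pμ x + t * pν x)) :=
      ((((hVm.add measurable_const).mul hqym).mul
        ((hpνm.sub hpμm).abs)).div measurable_const).ennreal_ofReal
    rw [lintegral_congr hsplit, lintegral_add_left hm1]
    apply add_le_add
    · calc ∫⁻ y, ENNReal.ofReal
            ((V y + V x) * q y x * |pν y - pμ y| / ((1 - t) * pμ x + t * pν x)) ∂lam
          ≤ ∫⁻ y, (⨆ y', ENNReal.ofReal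
                ((V y' + V x) * q y' x / (((1 - t) * pμ x + t * pν x) * V y')))
              * ENNReal.ofReal (V y * |pν y - pμ y|) ∂lam := by
            apply lintegral_mono
            intro y
            beta_reduce
            have heq : (V y + V x) * q y x * |pν y - pμ y| / ((1 - t) * pμ x + t * pν x)
                = ((V y + V x) * q y x / (((1 - t) * pμ x + t * pν x) * V y))
                  * (V y * |pν y - pμ y|) := by
              field_simp [hd.ne', (hV0 y).ne']
            rw [heq, ENNReal.ofReal_mul (div_nonneg
              (mul_nonneg (by linarith [hV0 y, hV0 x]) (hqpos y x).le)
              (mul_nonneg hd.le (hV0 y).le))]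
            exact mul_le_mul_left (le_iSup (fun y' => ENNReal.ofReal
              ((V y' + V x) * q y' x / (((1 - t) * pμ x + t * pν x) * V y'))) y) _
        _ = (⨆ y', ENNReal.ofReal
              ((V y' + V x) * q y' x / (((1 - t) * pμ x + t * pν x) * V y')))
            * ∫⁻ y, ENNReal.ofReal (V y * |pν y - pμ y|) ∂lam :=
            lintegral_const_mul _ (hVm.mul ((hpνm.sub hpμm).abs)).ennreal_ofReal
        _ = (⨆ y', ENNReal.ofReal
              ((V y' + V x) * q y' x / (((1 - t) * pμ x + t * pν x) * V y')))
            * ENNReal.ofReal (∫ y, V y * |pν y - pμ y| ∂lam) := by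
            rw [ofReal_integral_eq_lintegral_ofReal hVΔint
              (ae_of_all _ fun y => mul_nonneg (hV0 y).le (abs_nonneg _))]
        _ ≤ _ := mul_le_mul_right hCle _
    · apply le_of_eq
      have h2 : ∀ y, ENNReal.ofReal ((V x + V y) *
          (((1 - t) * pμ y + t * pν y) / ((1 - t) * pμ x + t * pν x) ^ 2) * q y x *
            (if ((1 - t) * pμ y + t * pν y) * q y x ≤
                ((1 - t) * pμ x + t * pν x) * q x y then (1:ℝ) else 0)
            * |pμ x - pν x|)
          = ENNReal.ofReal ((V x + V y) *
              (((1 - t) * pμ y + t * pν y) / ((1 - t) * pμ x + t * pν x) ^ 2) * q y x *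
                (if ((1 - t) * pμ y + t * pν y) * q y x ≤
                    ((1 - t) * pμ x + t * pν x) * q x y then (1:ℝ) else 0))
            * ENNReal.ofReal |pμ x - pν x| := fun y => ENNReal.ofReal_mul (hnn2 y)
      rw [lintegral_congr h2, lintegral_mul_const' _ _ ENNReal.ofReal_ne_top]
  -- conclusion
  rw [hrep]
  rcases eq_or_ne (vDistE V (lam.withDensity fun z => ENNReal.ofReal (pμ z))
      (lam.withDensity fun z => ENNReal.ofReal (pν z))) ⊤ with hvT | hvT
  · rw [hvT]
    have hpos : (∫⁻ t in Set.Icc (0:ℝ) 1, ⨆ y, ENNReal.ofReal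
        ((V y + V x) * q y x / (((1 - t) * pμ x + t * pν x) * V y))) ≠ 0 := by
      have hlow : ∀ t ∈ Set.Icc (0:ℝ) 1, ENNReal.ofReal (2 * q x x / (pμ x + pν x))
          ≤ ⨆ y, ENNReal.ofReal
              ((V y + V x) * q y x / (((1 - t) * pμ x + t * pν x) * V y)) := by
        intro t ht
        refine le_trans ?_ (le_iSup (fun y => ENNReal.ofReal
          ((V y + V x) * q y x / (((1 - t) * pμ x + t * pν x) * V y))) x)
        apply ENNReal.ofReal_le_ofReal
        have hd := hlz x t ht
        have hub : (1 - t) * pμ x + t * pν x ≤ pμ x + pν x := by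
          nlinarith [ht.1, ht.2, (hpμpos x).le, (hpνpos x).le]
        rw [show (V x + V x) * q x x / (((1 - t) * pμ x + t * pν x) * V x)
            = 2 * q x x / ((1 - t) * pμ x + t * pν x) from by
          field_simp [(hV0 x).ne', hd.ne']
          ring]
        rw [div_le_div_iff₀ (by linarith [hpμpos x, hpνpos x]) hd]
        exact mul_le_mul_of_nonneg_left hub (by linarith [hqpos x x])
      have hlb : ENNReal.ofReal (2 * q x x / (pμ x + pν x)) * volume (Set.Icc (0:ℝ) 1)
          ≤ ∫⁻ t in Set.Icc (0:ℝ) 1, ⨆ y, ENNReal.ofReal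
              ((V y + V x) * q y x / (((1 - t) * pμ x + t * pν x) * V y)) := by
        rw [← setLIntegral_const]
        exact setLIntegral_mono hSm hlow
      intro h0
      rw [h0, Real.volume_Icc] at hlb
      simp only [sub_zero, ENNReal.ofReal_one, mul_one, le_zero_iff] at hlb
      have hgt : 0 < 2 * q x x / (pμ x + pν x) :=
        div_pos (by linarith [hqpos x x]) (by linarith [hpμpos x, hpνpos x])
      rw [ENNReal.ofReal_eq_zero] at hlb
      linarith
    rw [ENNReal.mul_top hpos, top_add]
    exact le_top
  · calc ENNReal.ofReal |∫ y, (f y - f x) *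
          ((min 1 (hastingsRatio q pμ x y) - min 1 (hastingsRatio q pν x y)) * q x y) ∂lam|
        ≤ ENNReal.ofReal (∫ y, |(f y - f x) *
            ((min 1 (hastingsRatio q pμ x y) - min 1 (hastingsRatio q pν x y)) * q x y)| ∂lam) := by
          apply ENNReal.ofReal_le_ofReal
          have hni := norm_integral_le_integral_norm (μ := lam)
            (f := fun y => (f y - f x) *
              ((min 1 (hastingsRatio q pμ x y) - min 1 (hastingsRatio q pν x y)) * q x y))
          simp only [Real.norm_eq_abs] at hni
          exact hni
      _ = ∫⁻ y, ENNReal.ofReal |(f y - f x) *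
            ((min 1 (hastingsRatio q pμ x y) - min 1 (hastingsRatio q pν x y)) * q x y)| ∂lam :=
          ofReal_integral_eq_lintegral_ofReal hhint.abs (ae_of_all _ fun y => abs_nonneg _)
      _ ≤ ∫⁻ y, (∫⁻ t in Set.Icc (0:ℝ) 1, ENNReal.ofReal (Phi y t)) ∂lam :=
          lintegral_mono fun y => perY y
      _ = ∫⁻ t in Set.Icc (0:ℝ) 1, ∫⁻ y, ENNReal.ofReal (Phi y t) ∂lam :=
          lintegral_lintegral_swap hPhim
      _ ≤ ∫⁻ t in Set.Icc (0:ℝ) 1,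
            ((⨆ y, ENNReal.ofReal
                ((V y + V x) * q y x / (((1 - t) * pμ x + t * pν x) * V y)))
              * vDistE V (lam.withDensity fun z => ENNReal.ofReal (pμ z))
                  (lam.withDensity fun z => ENNReal.ofReal (pν z))
            + (∫⁻ z, ENNReal.ofReal
                  ((V x + V z) *
                    (((1 - t) * pμ z + t * pν z) / ((1 - t) * pμ x + t * pν x) ^ 2) *
                      q z x *
                        (if ((1 - t) * pμ z + t * pν z) * q z x ≤
                            ((1 - t) * pμ x + t * pν x) * q x z then 1 else 0)) ∂lam)
                * ENNReal.ofReal |pμ x - pν x|) := by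
          apply lintegral_mono_ae
          filter_upwards [self_mem_ae_restrict measurableSet_Icc] with t ht
          exact perT t ht
      _ = (∫⁻ t in Set.Icc (0:ℝ) 1, (⨆ y, ENNReal.ofReal
              ((V y + V x) * q y x / (((1 - t) * pμ x + t * pν x) * V y)))
            * vDistE V (lam.withDensity fun z => ENNReal.ofReal (pμ z))
                (lam.withDensity fun z => ENNReal.ofReal (pν z)))
          + ∫⁻ t in Set.Icc (0:ℝ) 1, (∫⁻ z, ENNReal.ofReal
                ((V x + V z) *
                  (((1 - t) * pμ z + t * pν z) / ((1 - t) * pμ x + t * pν x) ^ 2) *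
                    q z x *
                      (if ((1 - t) * pμ z + t * pν z) * q z x ≤
                          ((1 - t) * pμ x + t * pν x) * q x z then 1 else 0)) ∂lam)
              * ENNReal.ofReal |pμ x - pν x| :=
          lintegral_add_left (hSm.mul_const _) _
      _ = _ := by
          rw [lintegral_mul_const' _ _ hvT, lintegral_mul_const' _ _ ENNReal.ofReal_ne_top]
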